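/- arXiv:2008.09952 — 2 statements merged into one kernel-verified Lean document; each statement's English description precedes it below -/
import Mathlib

section
/- Let n ≥ 1, let 𝒪 be a bounded open subset of ℝⁿ and let 𝒪' be an open subset with 𝒪' ⊆ 𝒪. If u : ℝⁿ → ℝ is measurable and vanishes almost everywhere on the complement of 𝒪', then ‖u‖_{∼,1/2,𝒪}² ≤ (2ω_n + 1) ‖u‖_{∼,1/2,𝒪'}², i.e. ‖u‖_{∼,1/2,𝒪} ≤ (2ω_n + 1)^{1/2} ‖u‖_{∼,1/2,𝒪'}. -/
open MeasureTheory Metric Set ENNReal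

/-- The squared half-order weighted Sobolev norm on an open set `O ⊆ ℝⁿ`:
`‖u‖_{∼,1/2,O}² = ∬_{O×O} |u(x)−u(y)|²/|x−y|^{n+1} dx dy + ∫_O |u(x)|²/dist(x,∂O) dx`,
with values in `[0,∞]`. -/
noncomputable def halfNormSq (n : ℕ) (O : Set (EuclideanSpace ℝ (Fin n)))
    (u : EuclideanSpace ℝ (Fin n) → ℝ) : ℝ≥0∞ :=
  (∫⁻ x in O, ∫⁻ y in O, ENNReal.ofReal ((u x - u y) ^ 2 / dist x y ^ (n + 1))) +
    ∫⁻ x in O, ENNReal.ofReal ((u x) ^ 2 / infDist x Oᶜ)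

/-- The surface area `ω_n` of the unit sphere in `ℝⁿ`, as an extended nonnegative real. -/
noncomputable def surfaceAreaUnitSphere (n : ℕ) : ℝ≥0∞ :=
  (n : ℝ≥0∞) * volume (Metric.ball (0 : EuclideanSpace ℝ (Fin n)) 1)

namespace HalfNormAux

lemma lintegral_fun_norm (n : ℕ) (hn : 1 ≤ n) (g : ℝ → ℝ≥0∞) (hg : Measurable g) :
    ∫⁻ x : EuclideanSpace ℝ (Fin n), g ‖x‖ ∂volume =
      surfaceAreaUnitSphere n * ∫⁻ y in Ioi (0:ℝ), ENNReal.ofReal (y ^ (n-1)) * g y := by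
  set E := EuclideanSpace ℝ (Fin n)
  haveI : Nontrivial E :=
    Module.nontrivial_of_finrank_pos (R := ℝ) (by rw [finrank_euclideanSpace_fin]; omega)
  set μ : Measure E := volume
  have h0 : ∫⁻ x : E, g ‖x‖ ∂μ = ∫⁻ x in ({0}ᶜ : Set E), g ‖x‖ ∂μ := by
    rw [restrict_compl_singleton]
  have h1 : ∫⁻ x in ({0}ᶜ : Set E), g ‖x‖ ∂μ
      = ∫⁻ x : ({0}ᶜ : Set E), g ‖x.1‖ ∂(μ.comap Subtype.val) :=
    (lintegral_subtype_comap (measurableSet_singleton 0).compl _).symm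
  have h2 : ∫⁻ x : ({0}ᶜ : Set E), g ‖x.1‖ ∂(μ.comap Subtype.val)
      = ∫⁻ p : sphere (0:E) 1 × Ioi (0:ℝ), g p.2.1
          ∂(μ.toSphere.prod (Measure.volumeIoiPow (Module.finrank ℝ E - 1))) := by
    rw [← (μ.measurePreserving_homeomorphUnitSphereProd).lintegral_comp
      (f := fun p => g p.2.1) (hg.comp (measurable_subtype_coe.comp measurable_snd))]
    simp
  have h3 : ∫⁻ p : sphere (0:E) 1 × Ioi (0:ℝ), g p.2.1
          ∂(μ.toSphere.prod (Measure.volumeIoiPow (Module.finrank ℝ E - 1)))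
      = μ.toSphere univ * ∫⁻ y : Ioi (0:ℝ), g y.1 ∂(Measure.volumeIoiPow (Module.finrank ℝ E - 1)) := by
    rw [lintegral_prod (fun p : sphere (0:E) 1 × Ioi (0:ℝ) => g p.2.1)
      ((hg.comp (measurable_subtype_coe.comp measurable_snd)).aemeasurable)]
    simp [lintegral_const, mul_comm]
  have h4 : ∫⁻ y : Ioi (0:ℝ), g y.1 ∂(Measure.volumeIoiPow (Module.finrank ℝ E - 1))
      = ∫⁻ y in Ioi (0:ℝ), ENNReal.ofReal (y ^ (n-1)) * g y ∂volume := by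
    rw [Measure.volumeIoiPow,
      lintegral_withDensity_eq_lintegral_mul _
        (f := fun r : Ioi (0:ℝ) => ENNReal.ofReal (r.1 ^ (Module.finrank ℝ E - 1)))
        ((measurable_subtype_coe.pow_const _).ennreal_ofReal)
        (g := fun y : Ioi (0:ℝ) => g y.1) (hg.comp measurable_subtype_coe)]
    rw [finrank_euclideanSpace_fin]
    exact lintegral_subtype_comap measurableSet_Ioi (fun y => ENNReal.ofReal (y ^ (n-1)) * g y)
  rw [h0, h1, h2, h3, h4, Measure.toSphere_apply_univ, finrank_euclideanSpace_fin]
  rfl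

lemma key0 (n : ℕ) (hn : 1 ≤ n) {d : ℝ} (hd : 0 < d) :
    ∫⁻ z in (Metric.ball (0 : EuclideanSpace ℝ (Fin n)) d)ᶜ,
        ENNReal.ofReal ((‖z‖ ^ (n+1))⁻¹) ∂volume
      = surfaceAreaUnitSphere n / ENNReal.ofReal d := by
  set g : ℝ → ℝ≥0∞ := (Ici d).indicator (fun r => ENNReal.ofReal ((r ^ (n+1))⁻¹)) with hgdef
  have hg : Measurable g :=
    Measurable.indicator ((measurable_id.pow_const _).inv.ennreal_ofReal) measurableSet_Ici
  have h1 : ∫⁻ z in (Metric.ball (0 : EuclideanSpace ℝ (Fin n)) d)ᶜ,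
      ENNReal.ofReal ((‖z‖ ^ (n+1))⁻¹) ∂volume = ∫⁻ x : EuclideanSpace ℝ (Fin n), g ‖x‖ ∂volume := by
    rw [← lintegral_indicator (measurableSet_ball.compl) _]
    refine lintegral_congr fun x => ?_
    rw [hgdef]
    by_cases hx : d ≤ ‖x‖ <;>
      simp [Set.indicator_apply, mem_ball_zero_iff, hx, not_lt, not_le.2, lt_of_not_ge]
  have h2 : ∫⁻ y in Ioi (0:ℝ), ENNReal.ofReal (y ^ (n-1)) * g y = ENNReal.ofReal d⁻¹ := by
    have : ∀ y, ENNReal.ofReal (y ^ (n-1)) * g y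
        = (Ici d).indicator (fun y => ENNReal.ofReal (y ^ (n-1)) * ENNReal.ofReal ((y ^ (n+1))⁻¹)) y := by
      intro y
      by_cases hy : y ∈ Ici d
      · rw [hgdef, Set.indicator_of_mem hy, Set.indicator_of_mem hy]
      · rw [hgdef, Set.indicator_of_notMem hy, Set.indicator_of_notMem hy, mul_zero]
    rw [lintegral_congr this, lintegral_indicator measurableSet_Ici _,
      Measure.restrict_restrict measurableSet_Ici]
    have hsub : Ici d ∩ Ioi (0:ℝ) = Ici d :=
      Set.inter_eq_left.2 (fun y hy => lt_of_lt_of_le hd hy)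
    rw [hsub, ← Measure.restrict_congr_set Ioi_ae_eq_Ici]
    have h3 : ∀ y ∈ Ioi d, ENNReal.ofReal (y ^ (n-1)) * ENNReal.ofReal ((y ^ (n+1))⁻¹)
        = ENNReal.ofReal ((y^2)⁻¹) := by
      intro y hy
      have hy0 : (0:ℝ) < y := hd.trans hy
      rw [← ENNReal.ofReal_mul (by positivity)]
      congr 1
      have : y ^ (n+1) = y ^ (n-1) * y ^ 2 := by
        rw [← pow_add]; congr 1; omega
      rw [this]
      field_simp
    rw [setLIntegral_congr_fun measurableSet_Ioi h3]
    have hint : IntegrableOn (fun y : ℝ => (y^2)⁻¹) (Ioi d) := by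
      refine (integrableOn_Ioi_rpow_of_lt (by norm_num : (-2:ℝ) < -1) hd).congr_fun
        (fun x hx => ?_) measurableSet_Ioi
      have hx0 : (0:ℝ) < x := hd.trans hx
      dsimp only
      rw [show ((-2:ℝ)) = -(2:ℕ) by norm_num, Real.rpow_neg hx0.le, Real.rpow_natCast]
    rw [← ofReal_integral_eq_lintegral_ofReal hint
      (ae_of_all _ (fun y => by positivity))]
    congr 1
    have : ∫ y in Ioi d, (y^2)⁻¹ = ∫ y in Ioi d, y ^ (-2:ℝ) := by
      refine setIntegral_congr_fun measurableSet_Ioi (fun x hx => ?_)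
      have hx0 : (0:ℝ) < x := hd.trans hx
      rw [show ((-2:ℝ)) = -(2:ℕ) by norm_num, Real.rpow_neg hx0.le, Real.rpow_natCast]
    rw [this, integral_Ioi_rpow_of_lt (by norm_num) hd]
    norm_num
    rw [Real.rpow_neg_one]
  rw [h1, lintegral_fun_norm n hn g hg, h2, ENNReal.ofReal_inv_of_pos hd, div_eq_mul_inv]

lemma key (n : ℕ) (hn : 1 ≤ n) {d : ℝ} (hd : 0 < d) (c : EuclideanSpace ℝ (Fin n)) :
    ∫⁻ y in (Metric.ball c d)ᶜ, ENNReal.ofReal ((dist c y ^ (n+1))⁻¹) ∂volume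
      = surfaceAreaUnitSphere n / ENNReal.ofReal d := by
  have hmp : MeasurePreserving (fun z : EuclideanSpace ℝ (Fin n) => c + z) volume volume :=
    measurePreserving_add_left volume c
  have hemb : MeasurableEmbedding (fun z : EuclideanSpace ℝ (Fin n) => c + z) :=
    (Homeomorph.addLeft c).measurableEmbedding
  have := hmp.setLIntegral_comp_preimage_emb hemb
    (fun y => ENNReal.ofReal ((dist c y ^ (n+1))⁻¹)) (Metric.ball c d)ᶜ
  rw [← this]
  have hpre : (fun z : EuclideanSpace ℝ (Fin n) => c + z) ⁻¹' (Metric.ball c d)ᶜ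
      = (Metric.ball (0 : EuclideanSpace ℝ (Fin n)) d)ᶜ := by
    ext z
    simp [mem_ball, dist_self_add_left, mem_ball_zero_iff, dist_comm]
  rw [hpre, ← key0 n hn hd]
  refine setLIntegral_congr_fun measurableSet_ball.compl (fun z _ => ?_)
  rw [dist_self_add_right]

lemma infDist_compl_pos (n : ℕ) (hn : 1 ≤ n) {O' : Set (EuclideanSpace ℝ (Fin n))}
    (hO' : IsOpen O') (hbdd : Bornology.IsBounded O') {z : EuclideanSpace ℝ (Fin n)}
    (hz : z ∈ O') : 0 < infDist z O'ᶜ := by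
  haveI : Nontrivial (EuclideanSpace ℝ (Fin n)) :=
    Module.nontrivial_of_finrank_pos (R := ℝ) (by rw [finrank_euclideanSpace_fin]; omega)
  have hne : O'ᶜ.Nonempty := by
    obtain ⟨r, hr⟩ := hbdd.subset_closedBall 0
    obtain ⟨v, hv⟩ := exists_ne (0 : EuclideanSpace ℝ (Fin n))
    refine ⟨((|r| + 1) / ‖v‖) • v, fun hmem => ?_⟩
    have hnorm : ‖((|r| + 1) / ‖v‖) • v‖ = |r| + 1 := by
      rw [norm_smul, norm_div, Real.norm_eq_abs, norm_norm,
        div_mul_cancel₀ _ (norm_ne_zero_iff.2 hv), abs_of_pos (by positivity)]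
    have := hr hmem
    rw [mem_closedBall_zero_iff, hnorm] at this
    have : r ≤ |r| := le_abs_self r
    linarith [hr hmem, le_abs_self r,
      (mem_closedBall_zero_iff.1 (hr hmem)).trans_eq rfl, hnorm ▸ mem_closedBall_zero_iff.1 (hr hmem)]
  rw [← (hO'.isClosed_compl).notMem_iff_infDist_pos hne]
  simpa using hz

lemma inner_bound (n : ℕ) (hn : 1 ≤ n) {O' : Set (EuclideanSpace ℝ (Fin n))}
    (hO' : IsOpen O') (hbdd : Bornology.IsBounded O') {z : EuclideanSpace ℝ (Fin n)}
    (hz : z ∈ O') (c : ℝ) {S : Set (EuclideanSpace ℝ (Fin n))} (hS : S ⊆ O'ᶜ) :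
    ∫⁻ w in S, ENNReal.ofReal (c^2 / dist z w ^ (n+1)) ∂volume
      ≤ surfaceAreaUnitSphere n * ENNReal.ofReal (c^2 / infDist z O'ᶜ) := by
  set d := infDist z O'ᶜ with hddef
  have hd : 0 < d := infDist_compl_pos n hn hO' hbdd hz
  have hsub2 : S ⊆ (Metric.ball z d)ᶜ := by
    intro w hw
    simp only [mem_compl_iff, mem_ball, not_lt]
    rw [dist_comm]
    exact infDist_le_dist_of_mem (hS hw)
  calc ∫⁻ w in S, ENNReal.ofReal (c^2 / dist z w ^ (n+1)) ∂volume
      ≤ ∫⁻ w in (Metric.ball z d)ᶜ, ENNReal.ofReal (c^2 / dist z w ^ (n+1)) ∂volume :=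
        lintegral_mono_set hsub2
    _ = ∫⁻ w in (Metric.ball z d)ᶜ,
          ENNReal.ofReal (c^2) * ENNReal.ofReal ((dist z w ^ (n+1))⁻¹) ∂volume := by
        refine setLIntegral_congr_fun measurableSet_ball.compl (fun w hw => ?_)
        rw [div_eq_mul_inv, ENNReal.ofReal_mul (sq_nonneg c)]
    _ = ENNReal.ofReal (c^2) * ∫⁻ w in (Metric.ball z d)ᶜ,
          ENNReal.ofReal ((dist z w ^ (n+1))⁻¹) ∂volume := by
        have hmeas : Measurable fun w : EuclideanSpace ℝ (Fin n) =>
            ENNReal.ofReal ((dist z w ^ (n+1))⁻¹) := by fun_prop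
        rw [lintegral_const_mul _ hmeas]
    _ = ENNReal.ofReal (c^2) * (surfaceAreaUnitSphere n / ENNReal.ofReal d) := by
        rw [key n hn hd z]
    _ = surfaceAreaUnitSphere n * ENNReal.ofReal (c^2 / d) := by
        rw [ENNReal.ofReal_div_of_pos hd, div_eq_mul_inv, div_eq_mul_inv,
          ← mul_assoc, ← mul_assoc, mul_comm (ENNReal.ofReal (c^2))]

end HalfNormAux

open HalfNormAux in
theorem halfNormSq_le_of_support_subset (n : ℕ) (hn : 1 ≤ n)
    (O O' : Set (EuclideanSpace ℝ (Fin n)))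
    (hO : IsOpen O) (hObdd : Bornology.IsBounded O) (hO' : IsOpen O') (hsub : O' ⊆ O)
    (u : EuclideanSpace ℝ (Fin n) → ℝ) (hu : Measurable u)
    (hzero : ∀ᵐ x ∂(volume : Measure (EuclideanSpace ℝ (Fin n))), x ∉ O' → u x = 0) :
    halfNormSq n O u ≤ (2 * surfaceAreaUnitSphere n + 1) * halfNormSq n O' u := by
  set s : ℝ≥0∞ := surfaceAreaUnitSphere n with hs
  set F : EuclideanSpace ℝ (Fin n) → EuclideanSpace ℝ (Fin n) → ℝ≥0∞ :=
    fun x y => ENNReal.ofReal ((u x - u y) ^ 2 / dist x y ^ (n + 1)) with hFdef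
  have hFm : Measurable (Function.uncurry F) := by
    apply Measurable.ennreal_ofReal
    apply Measurable.div
    · fun_prop
    · fun_prop
  set G : EuclideanSpace ℝ (Fin n) → EuclideanSpace ℝ (Fin n) → ℝ≥0∞ :=
    fun x y => ENNReal.ofReal ((u y) ^ 2 / dist x y ^ (n + 1)) with hGdef
  have hGm : Measurable (Function.uncurry G) := by
    apply Measurable.ennreal_ofReal
    apply Measurable.div
    · fun_prop
    · fun_prop
  have hO'bdd : Bornology.IsBounded O' := hObdd.subset hsub
  have hOd : MeasurableSet (O \ O') := hO.measurableSet.diff hO'.measurableSet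
  have hdisj : Disjoint O' (O \ O') := Set.disjoint_sdiff_right
  have hOsplit : O' ∪ (O \ O') = O := Set.union_diff_cancel hsub
  set B' : ℝ≥0∞ := ∫⁻ x in O', ENNReal.ofReal ((u x) ^ 2 / infDist x O'ᶜ) with hB'def
  -- boundary term
  have hB : (∫⁻ x in O, ENNReal.ofReal ((u x) ^ 2 / infDist x Oᶜ)) ≤ B' := by
    have hsplit : (∫⁻ x in O, ENNReal.ofReal ((u x) ^ 2 / infDist x Oᶜ))
        = (∫⁻ x in O', ENNReal.ofReal ((u x) ^ 2 / infDist x Oᶜ))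
          + ∫⁻ x in O \ O', ENNReal.ofReal ((u x) ^ 2 / infDist x Oᶜ) := by
      have h := lintegral_union (μ := volume) hOd hdisj
        (f := fun x => ENNReal.ofReal ((u x) ^ 2 / infDist x Oᶜ))
      rw [hOsplit] at h
      exact h
    have h2 : (∫⁻ x in O \ O', ENNReal.ofReal ((u x) ^ 2 / infDist x Oᶜ)) = 0 := by
      have : ∀ᵐ x ∂(volume.restrict (O \ O')),
          ENNReal.ofReal ((u x) ^ 2 / infDist x Oᶜ) = 0 := by
        filter_upwards [ae_restrict_of_ae hzero, ae_restrict_mem hOd] with x hx hxm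
        rw [hx hxm.2]
        simp
      rw [lintegral_congr_ae this, lintegral_zero]
    have h1 : (∫⁻ x in O', ENNReal.ofReal ((u x) ^ 2 / infDist x Oᶜ)) ≤ B' := by
      refine setLIntegral_mono' hO'.measurableSet fun x hx => ?_
      apply ENNReal.ofReal_le_ofReal
      by_cases hb : infDist x Oᶜ = 0
      · rw [hb, _root_.div_zero]
        exact div_nonneg (sq_nonneg _) infDist_nonneg
      · have hbpos : 0 < infDist x Oᶜ := lt_of_le_of_ne infDist_nonneg (Ne.symm hb)
        have hOcne : Oᶜ.Nonempty := by
          by_contra hempty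
          rw [Set.not_nonempty_iff_eq_empty] at hempty
          rw [hempty, infDist_empty] at hb
          exact hb rfl
        have hle : infDist x O'ᶜ ≤ infDist x Oᶜ :=
          infDist_le_infDist_of_subset (Set.compl_subset_compl.2 hsub) hOcne
        exact div_le_div_of_nonneg_left (sq_nonneg _)
          (infDist_compl_pos n hn hO' hO'bdd hx) hle
    rw [hsplit, h2, add_zero]
    exact h1
  -- double integral
  have hI1m : Measurable fun x => ∫⁻ y in O', F x y :=
    Measurable.lintegral_prod_right' (ν := volume.restrict O') hFm
  have hAsplit : (∫⁻ x in O, ∫⁻ y in O, F x y)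
      = (∫⁻ x in O', ∫⁻ y in O', F x y) + (∫⁻ x in O', ∫⁻ y in O \ O', F x y)
        + ∫⁻ x in O \ O', ∫⁻ y in O, F x y := by
    conv_lhs => rw [← hOsplit, lintegral_union hOd hdisj]
    rw [hOsplit]
    congr 1
    have : ∀ x, ∫⁻ y in O, F x y = (∫⁻ y in O', F x y) + ∫⁻ y in O \ O', F x y := fun x => by
      have h := lintegral_union (μ := volume) hOd hdisj (f := fun y => F x y)
      rw [hOsplit] at h
      exact h
    rw [lintegral_congr this, lintegral_add_left hI1m]
  have hT1 : (∫⁻ x in O', ∫⁻ y in O \ O', F x y) ≤ s * B' := by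
    have hmeas : Measurable fun x : EuclideanSpace ℝ (Fin n) =>
        ENNReal.ofReal ((u x) ^ 2 / infDist x O'ᶜ) :=
      ((hu.pow_const 2).div (continuous_infDist_pt O'ᶜ).measurable).ennreal_ofReal
    rw [hB'def, ← lintegral_const_mul _ hmeas]
    refine setLIntegral_mono' hO'.measurableSet fun x hx => ?_
    have hstep : (∫⁻ y in O \ O', F x y)
        = ∫⁻ y in O \ O', ENNReal.ofReal ((u x) ^ 2 / dist x y ^ (n + 1)) := by
      refine lintegral_congr_ae ?_
      filter_upwards [ae_restrict_of_ae hzero, ae_restrict_mem hOd] with y hy hym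
      rw [hFdef]
      simp only
      rw [hy hym.2, sub_zero]
    rw [hstep]
    exact inner_bound n hn hO' hO'bdd hx (u x) (fun y hy => hy.2)
  have hT2 : (∫⁻ x in O \ O', ∫⁻ y in O, F x y) ≤ s * B' := by
    have hstep : (∫⁻ x in O \ O', ∫⁻ y in O, F x y)
        = ∫⁻ x in O \ O', ∫⁻ y in O', G x y := by
      refine lintegral_congr_ae ?_
      filter_upwards [ae_restrict_of_ae hzero, ae_restrict_mem hOd] with x hx hxm
      have hux : u x = 0 := hx hxm.2
      have hz2 : (∫⁻ y in O \ O', F x y) = 0 := by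
        have : ∀ᵐ y ∂(volume.restrict (O \ O')), F x y = 0 := by
          filter_upwards [ae_restrict_of_ae hzero, ae_restrict_mem hOd] with y hy hym
          rw [hFdef]
          simp only
          rw [hux, hy hym.2]
          simp
        rw [lintegral_congr_ae this, lintegral_zero]
      calc ∫⁻ y in O, F x y = (∫⁻ y in O', F x y) + ∫⁻ y in O \ O', F x y := by
            have h := lintegral_union (μ := volume) hOd hdisj (f := fun y => F x y)
            rw [hOsplit] at h
            exact h
        _ = ∫⁻ y in O', G x y := by
            rw [hz2, add_zero]
            refine lintegral_congr fun y => ?_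
            rw [hFdef, hGdef]
            simp only
            rw [hux, zero_sub, neg_sq]
    rw [hstep, lintegral_lintegral_swap (hGm.aemeasurable)]
    have hbound : (∫⁻ y in O', ∫⁻ x in O \ O', G x y)
        ≤ ∫⁻ y in O', s * ENNReal.ofReal ((u y) ^ 2 / infDist y O'ᶜ) := by
      refine setLIntegral_mono' hO'.measurableSet fun y hy => ?_
      have : (∫⁻ x in O \ O', G x y)
          = ∫⁻ x in O \ O', ENNReal.ofReal ((u y) ^ 2 / dist y x ^ (n + 1)) := by
        refine lintegral_congr fun x => ?_
        rw [hGdef]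
        simp only
        rw [dist_comm]
      rw [this]
      exact inner_bound n hn hO' hO'bdd hy (u y) (fun x hx => hx.2)
    refine hbound.trans ?_
    have hmeas : Measurable fun x : EuclideanSpace ℝ (Fin n) =>
        ENNReal.ofReal ((u x) ^ 2 / infDist x O'ᶜ) :=
      ((hu.pow_const 2).div (continuous_infDist_pt O'ᶜ).measurable).ennreal_ofReal
    rw [lintegral_const_mul _ hmeas, hB'def]
  -- assemble
  have hA : (∫⁻ x in O, ∫⁻ y in O, F x y)
      ≤ (∫⁻ x in O', ∫⁻ y in O', F x y) + s * B' + s * B' := by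
    rw [hAsplit]
    exact add_le_add (add_le_add le_rfl hT1) hT2
  have hfinal : halfNormSq n O u ≤ (∫⁻ x in O', ∫⁻ y in O', F x y) + s * B' + s * B' + B' := by
    exact add_le_add hA hB
  refine hfinal.trans ?_
  have hexp : (2 * s + 1) * halfNormSq n O' u
      = (2 * s + 1) * (∫⁻ x in O', ∫⁻ y in O', F x y) + (2 * s + 1) * B' := by
    rw [halfNormSq, mul_add]
  rw [hexp]
  have h1 : (∫⁻ x in O', ∫⁻ y in O', F x y) + s * B' + s * B' + B'
      = (∫⁻ x in O', ∫⁻ y in O', F x y) + (2 * s + 1) * B' := by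
    rw [add_mul, one_mul, two_mul, add_mul]
    ring
  rw [h1]
  exact add_le_add (le_mul_of_one_le_left zero_le le_add_self) le_rfl
end

section
/- Let n ≥ 1, let 𝒪 and 𝒪' be open subsets of ℝⁿ with 𝒪' ⊆ 𝒪, and let u : ℝⁿ → ℝ be measurable and vanish almost everywhere on 𝒪 ∖ 𝒪'. Then the Gagliardo seminorm of order 1/2 on 𝒪 splits as ∬_{𝒪×𝒪} |u(x)−u(y)|²/|x−y|^{n+1} dx dy = ∬_{𝒪'×𝒪'} |u(x)−u(y)|²/|x−y|^{n+1} dx dy + 2 ∫_{𝒪'} (∫_{𝒪∖𝒪'} |x−y|^{−(n+1)} dy) |u(x)|² dx. -/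
open MeasureTheory Metric Set ENNReal

/-- Splitting of the Gagliardo seminorm of order `1/2`: if `u` vanishes a.e. on `O ∖ O'`, then
`∬_{O×O} |u(x)−u(y)|²/|x−y|^{n+1} = ∬_{O'×O'} |u(x)−u(y)|²/|x−y|^{n+1}
  + 2 ∫_{O'} (∫_{O∖O'} |x−y|^{−(n+1)} dy) |u(x)|² dx`. -/
theorem gagliardo_half_split (n : ℕ) (hn : 1 ≤ n)
    (O O' : Set (EuclideanSpace ℝ (Fin n))) (hO : IsOpen O) (hO' : IsOpen O')
    (hsub : O' ⊆ O) (u : EuclideanSpace ℝ (Fin n) → ℝ) (hu : Measurable u)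
    (hzero : ∀ᵐ x ∂(volume.restrict (O \ O')), u x = 0) :
    (∫⁻ x in O, ∫⁻ y in O, ENNReal.ofReal ((u x - u y) ^ 2 / dist x y ^ (n + 1))) =
      (∫⁻ x in O', ∫⁻ y in O', ENNReal.ofReal ((u x - u y) ^ 2 / dist x y ^ (n + 1))) +
        2 * ∫⁻ x in O',
          (∫⁻ y in O \ O', ENNReal.ofReal (1 / dist x y ^ (n + 1))) *
            ENNReal.ofReal ((u x) ^ 2) := by
  have hdm : MeasurableSet (O \ O') := hO.measurableSet.diff hO'.measurableSet
  have hdisj : Disjoint O' (O \ O') := disjoint_sdiff_right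
  have hE : O' ∪ (O \ O') = O := Set.union_diff_cancel hsub
  -- the full integrand is measurable on the product
  have hF : Measurable fun p : EuclideanSpace ℝ (Fin n) × EuclideanSpace ℝ (Fin n) =>
      ENNReal.ofReal ((u p.1 - u p.2) ^ 2 / dist p.1 p.2 ^ (n + 1)) := by fun_prop
  -- split the inner integral
  have hinner : ∀ x, (∫⁻ y in O, ENNReal.ofReal ((u x - u y) ^ 2 / dist x y ^ (n + 1)))
      = (∫⁻ y in O', ENNReal.ofReal ((u x - u y) ^ 2 / dist x y ^ (n + 1)))
        + ∫⁻ y in O \ O', ENNReal.ofReal ((u x - u y) ^ 2 / dist x y ^ (n + 1)) := by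
    intro x
    rw [← lintegral_union hdm hdisj, hE]
  have hG1 : Measurable fun x => ∫⁻ y in O',
      ENNReal.ofReal ((u x - u y) ^ 2 / dist x y ^ (n + 1)) :=
    Measurable.lintegral_prod_right hF
  -- T12 = T
  have hT12 : ∀ x, (∫⁻ y in O \ O', ENNReal.ofReal ((u x - u y) ^ 2 / dist x y ^ (n + 1)))
      = (∫⁻ y in O \ O', ENNReal.ofReal (1 / dist x y ^ (n + 1))) *
          ENNReal.ofReal ((u x) ^ 2) := by
    intro x
    have : (∫⁻ y in O \ O', ENNReal.ofReal ((u x - u y) ^ 2 / dist x y ^ (n + 1)))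
        = ∫⁻ y in O \ O',
            ENNReal.ofReal (1 / dist x y ^ (n + 1)) * ENNReal.ofReal ((u x) ^ 2) := by
      apply lintegral_congr_ae
      filter_upwards [hzero] with y hy
      rw [hy, sub_zero, ← ENNReal.ofReal_mul (by positivity)]
      congr 1
      ring
    rw [this, lintegral_mul_const' _ _ ENNReal.ofReal_ne_top]
  -- T22 = 0
  have hT22 : (∫⁻ x in O \ O', ∫⁻ y in O \ O',
      ENNReal.ofReal ((u x - u y) ^ 2 / dist x y ^ (n + 1))) = 0 := by
    have : (∫⁻ x in O \ O', ∫⁻ y in O \ O',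
        ENNReal.ofReal ((u x - u y) ^ 2 / dist x y ^ (n + 1)))
        = ∫⁻ _ in O \ O', (0 : ℝ≥0∞) := by
      apply lintegral_congr_ae
      filter_upwards [hzero] with x hx
      have : (∫⁻ y in O \ O', ENNReal.ofReal ((u x - u y) ^ 2 / dist x y ^ (n + 1)))
          = ∫⁻ _ in O \ O', (0 : ℝ≥0∞) := by
        apply lintegral_congr_ae
        filter_upwards [hzero] with y hy
        rw [hx, hy]
        simp
      rw [this, lintegral_zero]
    rw [this, lintegral_zero]
  -- T21 = T
  have hT21 : (∫⁻ x in O \ O', ∫⁻ y in O',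
      ENNReal.ofReal ((u x - u y) ^ 2 / dist x y ^ (n + 1)))
      = ∫⁻ x in O', (∫⁻ y in O \ O', ENNReal.ofReal (1 / dist x y ^ (n + 1))) *
          ENNReal.ofReal ((u x) ^ 2) := by
    have step1 : (∫⁻ x in O \ O', ∫⁻ y in O',
        ENNReal.ofReal ((u x - u y) ^ 2 / dist x y ^ (n + 1)))
        = ∫⁻ x in O \ O', ∫⁻ y in O',
            ENNReal.ofReal (1 / dist x y ^ (n + 1)) * ENNReal.ofReal ((u y) ^ 2) := by
      apply lintegral_congr_ae
      filter_upwards [hzero] with x hx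
      apply lintegral_congr fun y => ?_
      rw [hx, zero_sub, neg_sq, ← ENNReal.ofReal_mul (by positivity)]
      congr 1
      ring
    rw [step1]
    rw [lintegral_lintegral_swap (by fun_prop)]
    apply lintegral_congr fun y => ?_
    rw [lintegral_mul_const' _ _ ENNReal.ofReal_ne_top]
    congr 1
    apply lintegral_congr fun x => ?_
    rw [dist_comm]
  calc
    (∫⁻ x in O, ∫⁻ y in O, ENNReal.ofReal ((u x - u y) ^ 2 / dist x y ^ (n + 1)))
        = ∫⁻ x in O, ((∫⁻ y in O', ENNReal.ofReal ((u x - u y) ^ 2 / dist x y ^ (n + 1)))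
            + ∫⁻ y in O \ O', ENNReal.ofReal ((u x - u y) ^ 2 / dist x y ^ (n + 1))) := by
          exact lintegral_congr fun x => hinner x
    _ = (∫⁻ x in O, ∫⁻ y in O', ENNReal.ofReal ((u x - u y) ^ 2 / dist x y ^ (n + 1)))
          + ∫⁻ x in O, ∫⁻ y in O \ O',
              ENNReal.ofReal ((u x - u y) ^ 2 / dist x y ^ (n + 1)) :=
        lintegral_add_left hG1 _
    _ = ((∫⁻ x in O', ∫⁻ y in O', ENNReal.ofReal ((u x - u y) ^ 2 / dist x y ^ (n + 1)))
          + ∫⁻ x in O \ O', ∫⁻ y in O',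
              ENNReal.ofReal ((u x - u y) ^ 2 / dist x y ^ (n + 1)))
        + ((∫⁻ x in O', ∫⁻ y in O \ O',
              ENNReal.ofReal ((u x - u y) ^ 2 / dist x y ^ (n + 1)))
          + ∫⁻ x in O \ O', ∫⁻ y in O \ O',
              ENNReal.ofReal ((u x - u y) ^ 2 / dist x y ^ (n + 1))) := by
        rw [← lintegral_union (μ := volume) hdm hdisj, ← lintegral_union (μ := volume) hdm hdisj, hE]
    _ = (∫⁻ x in O', ∫⁻ y in O', ENNReal.ofReal ((u x - u y) ^ 2 / dist x y ^ (n + 1)))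
        + 2 * ∫⁻ x in O', (∫⁻ y in O \ O', ENNReal.ofReal (1 / dist x y ^ (n + 1))) *
            ENNReal.ofReal ((u x) ^ 2) := by
        rw [hT21, hT22, add_zero, lintegral_congr fun x => hT12 x, two_mul]
        ring
end
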